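/- Let τ : M̃ → M be a covering map between nonempty, path-connected and locally path-connected topological spaces such that every fiber τ⁻¹(x) is finite with exactly p elements, where p is a positive integer. Fix a point x̃₀ ∈ M̃ and set x₀ = τ(x̃₀). If the fundamental group π₁(M, x₀) is commutative, then π₁(M̃, x̃₀) is commutative, and moreover for every element γ ∈ π₁(M, x₀) the p-th power γᵖ lies in the image of the induced homomorphism τ_* : π₁(M̃, x̃₀) → π₁(M, x₀). -/

import Mathlib

open CategoryTheory FundamentalGroupoid

universe u

/-- The homomorphism `τ_* : π₁(M̃, x̃₀) → π₁(M, τ(x̃₀))` induced by a continuous map `τ`. -/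
noncomputable def piOneInducedHom {X Y : Type u} [TopologicalSpace X] [TopologicalSpace Y]
    (f : C(X, Y)) (x : X) :
    FundamentalGroup X x →* FundamentalGroup Y (f x) :=
  Functor.mapEnd ((⟨x⟩ : FundamentalGroupoid (TopCat.of X))) (πₘ (show TopCat.of X ⟶ TopCat.of Y from TopCat.ofHom f))



open unitInterval Set

section Lifting

/-- Uniqueness of lifts along the unit interval. -/
theorem IsCoveringMap.lift_unique' {E X : Type*} [TopologicalSpace E] [TopologicalSpace X]
    {f : E → X} (hf : IsCoveringMap f) {A B : I → E}
    (hA : Continuous A) (hB : Continuous B)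
    (h : ∀ t, f (A t) = f (B t)) (h0 : A 0 = B 0) : A = B :=
  hf.eq_of_comp_eq hA hB (funext h) 0 h0


variable {E X : Type*} [TopologicalSpace E] [TopologicalSpace X] {f : E → X}

theorem exists_lift_nhd (hf : IsCoveringMap f) {Z : Type*} [TopologicalSpace Z]
    (H : C(Z × I, X)) (g : Z → E) (hgc : Continuous g) (hg0 : ∀ z, f (g z) = H (z, 0)) (z₀ : Z) :
    ∃ N : Set Z, IsOpen N ∧ z₀ ∈ N ∧ ∃ L : ↥N × I → E, Continuous L ∧
      (∀ p : ↥N × I, f (L p) = H (p.1.1, p.2)) ∧ ∀ z : ↥N, L (z, 0) = g z.1 := by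
  classical
  -- trivializations around each point of the path at `z₀`
  have hTT : ∀ t : I, ∃ T : Bundle.Trivialization (f ⁻¹' {H (z₀, t)}) f, H (z₀, t) ∈ T.baseSet :=
    fun t => by
    haveI : Nonempty (f ⁻¹' {H (z₀, t)}) :=
      ⟨⟨hf.liftPath (H.comp ⟨fun s => (z₀, s), by fun_prop⟩) (g z₀) (hg0 z₀).symm t,
        congrFun (hf.liftPath_lifts _ _ _) t⟩⟩
    exact ⟨(hf (H (z₀, t))).toTrivialization, (hf (H (z₀, t))).mem_toTrivialization_baseSet⟩
  choose T hT using hTT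
  -- product neighborhoods
  have hprod : ∀ t : I, ∃ A : Set Z, ∃ B : Set I, IsOpen A ∧ IsOpen B ∧ z₀ ∈ A ∧ t ∈ B ∧
      A ×ˢ B ⊆ (fun p : Z × I => H p) ⁻¹' (T t).baseSet := by
    intro t
    have hVo : IsOpen ((fun p : Z × I => H p) ⁻¹' (T t).baseSet) :=
      (T t).open_baseSet.preimage H.continuous
    obtain ⟨A, B, hAo, hBo, hzA, htB, hsub⟩ := isOpen_prod_iff.mp hVo z₀ t (hT t)
    exact ⟨A, B, hAo, hBo, hzA, htB, hsub⟩
  choose A B hAo hBo hzA htB hABsub using hprod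
  -- Lebesgue number for the cover `B` of `I`
  obtain ⟨δ, hδ, hball⟩ := lebesgue_number_lemma_of_metric isCompact_univ hBo
    (fun t _ => mem_iUnion.2 ⟨t, htB t⟩)
  obtain ⟨n', hn'⟩ := exists_nat_one_div_lt hδ
  set n : ℕ := n' + 1 with hn
  have hnpos : (0 : ℝ) < n := by positivity
  have h1n : (1 : ℝ) / n < δ := by exact_mod_cast hn'
  -- the subdivision points
  set c : ℕ → I := fun k => ⟨min ((k : ℝ) / n) 1, le_min (by positivity) zero_le_one,
    min_le_right _ _⟩ with hc
  have hcoe : ∀ k, k ≤ n → (c k : ℝ) = (k : ℝ) / n := by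
    intro k hk
    exact min_eq_left ((div_le_one hnpos).mpr (by exact_mod_cast hk))
  have hc0 : c 0 = 0 := by
    ext; rw [hcoe 0 (Nat.zero_le n)]; simp
  have hcn : c n = 1 := by
    ext; rw [hcoe n le_rfl]; field_simp; rfl
  have hcmono : ∀ k, c k ≤ c (k + 1) := by
    intro k
    show (c k : ℝ) ≤ c (k + 1)
    apply min_le_min _ le_rfl
    gcongr
    exact_mod_cast Nat.le_succ k
  -- choose indices for each subdivision interval
  have hchoose : ∀ k : ℕ, ∃ t : I, Metric.ball (c k) δ ⊆ B t := fun k => hball (c k) trivial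
  choose idx hidx using hchoose
  -- the neighborhood
  refine ⟨⋂ k ∈ Finset.range n, A (idx k), isOpen_biInter_finset fun k _ => hAo _, ?_, ?_⟩
  · exact mem_biInter fun k _ => hzA _
  set N : Set Z := ⋂ k ∈ Finset.range n, A (idx k) with hN
  -- key inclusion
  have hsub : ∀ k, k < n → ∀ z : ↥N, ∀ t : I, c k ≤ t → t ≤ c (k + 1) →
      H (z.1, t) ∈ (T (idx k)).baseSet := by
    intro k hk z t h1 h2
    apply hABsub (idx k)
    constructor
    · exact mem_iInter₂.mp z.2 k (Finset.mem_range.mpr hk)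
    · apply hidx k
      rw [Metric.mem_ball, Subtype.dist_eq, Real.dist_eq,
        abs_of_nonneg (sub_nonneg.mpr (show (c k : ℝ) ≤ t from h1))]
      have h3 : (t : ℝ) - c k ≤ (c (k + 1) : ℝ) - c k := by
        have : (t : ℝ) ≤ c (k + 1) := h2
        linarith
      refine lt_of_le_of_lt h3 ?_
      rw [hcoe k (le_of_lt hk), hcoe (k + 1) hk, div_sub_div_same, Nat.cast_succ,
        add_sub_cancel_left]
      exact h1n
  -- main induction
  have main : ∀ m, m ≤ n → ∃ L : ↥N × I → E, Continuous L ∧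
      (∀ p : ↥N × I, f (L p) = H (p.1.1, min p.2 (c m))) ∧ ∀ z : ↥N, L (z, 0) = g z.1 := by
    intro m
    induction m with
    | zero =>
      intro _
      refine ⟨fun p => g p.1.1, hgc.comp (continuous_subtype_val.comp continuous_fst),
        fun p => ?_, fun z => rfl⟩
      rw [hg0, hc0, min_eq_right unitInterval.nonneg']
    | succ m ih =>
      intro hm1
      obtain ⟨L, hLc, hLf, hL0⟩ := ih (Nat.le_of_succ_le hm1)
      have hmn : m < n := hm1
      set T' := T (idx m) with hT'
      have hmem : ∀ z : ↥N, H (z.1, c m) ∈ T'.baseSet :=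
        fun z => hsub m hmn z (c m) le_rfl (hcmono m)
      have hLfm : ∀ z : ↥N, f (L (z, c m)) = H (z.1, c m) := by
        intro z; rw [hLf (z, c m), min_self]
      have hsrc : ∀ z : ↥N, L (z, c m) ∈ T'.source := by
        intro z; rw [T'.mem_source, hLfm z]; exact hmem z
      -- clamp map
      set clamp : I → I := fun t => min (max t (c m)) (c (m + 1)) with hclamp
      have hclamp_mem : ∀ z : ↥N, ∀ t : I, H (z.1, clamp t) ∈ T'.baseSet := by
        intro z t
        exact hsub m hmn z _ (le_min (le_max_right _ _) (hcmono m)) (min_le_right _ _)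
      set Lnew : ↥N × I → E := fun p =>
        if p.2 ≤ c m then L p
        else T'.toPartialEquiv.symm (H (p.1.1, clamp p.2), (T' (L (p.1, c m))).2) with hLnew
      have hbr2 : Continuous fun p : ↥N × I =>
          T'.toPartialEquiv.symm (H (p.1.1, clamp p.2), (T' (L (p.1, c m))).2) := by
        have hclampc : Continuous clamp := (continuous_id.max continuous_const).min continuous_const
        have hinner : Continuous fun p : ↥N × I =>
            ((H (p.1.1, clamp p.2), (T' (L (p.1, c m))).2) : X × (f ⁻¹' {H (z₀, idx m)})) := by
          apply Continuous.prodMk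
          · exact H.continuous.comp ((continuous_subtype_val.comp continuous_fst).prodMk
              (hclampc.comp continuous_snd))
          · have hLcm : Continuous fun p : ↥N × I => L (p.1, c m) :=
              hLc.comp (continuous_fst.prodMk continuous_const)
            exact ((T'.continuousOn_toFun.comp_continuous hLcm fun p => hsrc p.1)).snd
        apply T'.toOpenPartialHomeomorph.continuousOn_symm.comp_continuous hinner
        intro p
        rw [T'.target_eq]
        exact ⟨hclamp_mem p.1 p.2, trivial⟩
      have hbdry : ∀ p : ↥N × I, p.2 = c m → L p =
          T'.toPartialEquiv.symm (H (p.1.1, clamp p.2), (T' (L (p.1, c m))).2) := by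
        rintro ⟨z, t⟩ ht
        dsimp only at ht ⊢
        subst ht
        have h1 : clamp (c m) = c m := by
          simp only [hclamp, max_self, min_eq_left (hcmono m)]
        rw [h1, ← hLfm z]
        exact (T'.symm_apply_mk_proj (hsrc z)).symm
      refine ⟨Lnew, ?_, ?_, ?_⟩
      · exact Continuous.if_le hLc hbr2 continuous_snd continuous_const hbdry
      · rintro ⟨z, t⟩
        by_cases ht : t ≤ c m
        · rw [hLnew]
          simp only [if_pos ht]
          rw [hLf (z, t), min_eq_left ht, min_eq_left (le_trans ht (hcmono m))]
        · rw [hLnew]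
          simp only [if_neg ht]
          have h3 : clamp t = t ⊓ c (m + 1) := by
            simp only [hclamp]
            rw [max_eq_left (le_of_lt (not_le.mp ht))]
          rw [← h3]
          exact T'.proj_symm_apply' (hclamp_mem z t)
      · intro z
        rw [hLnew]
        simp only
        rw [if_pos (show (0 : I) ≤ c m from (c m).2.1)]
        exact hL0 z
  obtain ⟨L, hLc, hLf, hL0⟩ := main n le_rfl
  refine ⟨L, hLc, fun p => ?_, hL0⟩
  rw [hLf p, hcn, min_eq_left unitInterval.le_one']

theorem IsCoveringMap.exists_lift (hf : IsCoveringMap f) {Z : Type*} [TopologicalSpace Z]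
    (H : C(Z × I, X)) (g : Z → E) (hgc : Continuous g) (hg0 : ∀ z, f (g z) = H (z, 0)) :
    ∃ L : Z × I → E, Continuous L ∧ (∀ p, f (L p) = H p) ∧ ∀ z, L (z, 0) = g z := by
  choose N hNo hNm L hLc hLf hL0 using fun z => exists_lift_nhd hf H g hgc hg0 z
  set Ltot : Z × I → E := fun p => L p.1 (⟨p.1, hNm p.1⟩, p.2) with hLtot
  have hslice : ∀ z, ∀ w : ↥(N z), (fun t => L z (w, t)) = fun t => Ltot (w.1, t) := by
    intro z w
    refine hf.lift_unique' ?_ ?_ ?_ ?_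
    · exact (hLc z).comp (Continuous.prodMk_right w)
    · exact ((hLc w.1).comp (Continuous.prodMk_right (⟨w.1, hNm w.1⟩ : ↥(N w.1))))
    · intro t; rw [hLf z (w, t), hLf w.1 _]
    · exact (hL0 z w).trans (hL0 (w.1) ⟨w.1, hNm w.1⟩).symm
  have key : ∀ z, ∀ w : ↥(N z), ∀ t, L z (w, t) = Ltot (w.1, t) := by
    intro z w t; exact congrFun (hslice z w) t
  refine ⟨Ltot, ?_, fun p => hLf p.1 _, fun z => hL0 z _⟩
  rw [continuous_iff_continuousAt]
  rintro ⟨z, t⟩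
  have hemb : Topology.IsOpenEmbedding (fun q : ↥(N z) × I => ((q.1 : Z), q.2)) :=
    ((hNo z).isOpenEmbedding_subtypeVal).prodMap Topology.IsOpenEmbedding.id
  have hcomp : (fun q : ↥(N z) × I => Ltot ((q.1 : Z), q.2)) = L z := by
    funext q; exact (key z q.1 q.2).symm
  have : ContinuousAt (Ltot ∘ fun q : ↥(N z) × I => ((q.1 : Z), q.2)) (⟨z, hNm z⟩, t) := by
    show ContinuousAt (fun q : ↥(N z) × I => Ltot ((q.1 : Z), q.2)) _
    rw [hcomp]; exact (hLc z).continuousAt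
  exact (hemb.continuousAt_iff.mp this)


end Lifting
section PathLift

open unitInterval

variable {E X : Type u} [TopologicalSpace E] [TopologicalSpace X] {f : E → X}

theorem IsCoveringMap.exists_path_lift (hf : IsCoveringMap f) (γ : C(I, X)) (e : E)
    (he : f e = γ 0) : ∃ Γ : I → E, Continuous Γ ∧ (∀ t, f (Γ t) = γ t) ∧ Γ 0 = e := by
  obtain ⟨L, hLc, hLf, hL0⟩ := hf.exists_lift
    (⟨fun p : Unit × I => γ p.2, γ.continuous.comp continuous_snd⟩) (fun _ => e)
    continuous_const (fun _ => he)
  exact ⟨fun t => L ((), t), hLc.comp (Continuous.prodMk_right _), fun t => hLf _, hL0 _⟩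

/-- The lift of a path (as a continuous map on `I`) through a covering map,
starting at a given point of the fiber. -/
noncomputable def IsCoveringMap.pathLift (hf : IsCoveringMap f) (γ : C(I, X)) (e : E)
    (he : f e = γ 0) : I → E :=
  (hf.exists_path_lift γ e he).choose

theorem IsCoveringMap.pathLift_continuous (hf : IsCoveringMap f) (γ : C(I, X)) (e : E)
    (he : f e = γ 0) : Continuous (hf.pathLift γ e he) :=
  (hf.exists_path_lift γ e he).choose_spec.1

theorem IsCoveringMap.pathLift_lifts (hf : IsCoveringMap f) (γ : C(I, X)) (e : E)
    (he : f e = γ 0) : ∀ t, f (hf.pathLift γ e he t) = γ t :=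
  (hf.exists_path_lift γ e he).choose_spec.2.1

theorem IsCoveringMap.pathLift_zero (hf : IsCoveringMap f) (γ : C(I, X)) (e : E)
    (he : f e = γ 0) : hf.pathLift γ e he 0 = e :=
  (hf.exists_path_lift γ e he).choose_spec.2.2

theorem IsCoveringMap.pathLift_eq (hf : IsCoveringMap f) (γ : C(I, X)) (e : E)
    (he : f e = γ 0) {Γ : I → E} (hc : Continuous Γ) (hl : ∀ t, f (Γ t) = γ t)
    (h0 : Γ 0 = e) : hf.pathLift γ e he = Γ :=
  hf.lift_unique' (hf.pathLift_continuous γ e he) hc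
    (fun t => by rw [hf.pathLift_lifts γ e he t, hl t])
    (by rw [hf.pathLift_zero, h0])

/-- Endpoint of the lift of a path, starting at `e`. -/
noncomputable def IsCoveringMap.transport (hf : IsCoveringMap f) {x y : X} (γ : Path x y)
    (e : E) (he : f e = x) : E :=
  hf.pathLift γ.toContinuousMap e (he.trans γ.source.symm) 1

theorem IsCoveringMap.transport_eq (hf : IsCoveringMap f) {x y : X} (γ : Path x y)
    (e : E) (he : f e = x) {Γ : I → E} (hc : Continuous Γ) (hl : ∀ t, f (Γ t) = γ t)
    (h0 : Γ 0 = e) : hf.transport γ e he = Γ 1 := by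
  show hf.pathLift γ.toContinuousMap e (he.trans γ.source.symm) 1 = Γ 1
  rw [hf.pathLift_eq _ _ _ hc hl h0]

theorem IsCoveringMap.transport_mem_fiber (hf : IsCoveringMap f) {x y : X} (γ : Path x y)
    (e : E) (he : f e = x) : f (hf.transport γ e he) = y := by
  show f (hf.pathLift γ.toContinuousMap e (he.trans γ.source.symm) 1) = y
  rw [hf.pathLift_lifts]
  exact γ.target

theorem IsCoveringMap.transport_refl (hf : IsCoveringMap f) {x : X} (e : E) (he : f e = x) :
    hf.transport (Path.refl x) e he = e :=
  hf.transport_eq (Path.refl x) e he continuous_const (fun _ => by simp [he]) rfl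

/-- The lift of a path as a `Path` in the total space. -/
noncomputable def IsCoveringMap.liftPath' (hf : IsCoveringMap f) {x y : X} (γ : Path x y)
    (e : E) (he : f e = x) : Path e (hf.transport γ e he) where
  toFun := hf.pathLift γ.toContinuousMap e (he.trans γ.source.symm)
  continuous_toFun := hf.pathLift_continuous γ.toContinuousMap e (he.trans γ.source.symm)
  source' := hf.pathLift_zero γ.toContinuousMap e (he.trans γ.source.symm)
  target' := rfl

theorem IsCoveringMap.liftPath'_lifts (hf : IsCoveringMap f) {x y : X} (γ : Path x y)
    (e : E) (he : f e = x) : ∀ t, f (hf.liftPath' γ e he t) = γ t :=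
  fun t => hf.pathLift_lifts γ.toContinuousMap e (he.trans γ.source.symm) t

theorem IsCoveringMap.transport_trans (hf : IsCoveringMap f) {x y z : X} (γ₁ : Path x y)
    (γ₂ : Path y z) (e : E) (he : f e = x) :
    hf.transport (γ₁.trans γ₂) e he =
      hf.transport γ₂ (hf.transport γ₁ e he) (hf.transport_mem_fiber γ₁ e he) := by
  set e₁ := hf.transport γ₁ e he with he₁
  set P₁ := hf.liftPath' γ₁ e he with hP₁
  set P₂ := hf.liftPath' γ₂ e₁ (hf.transport_mem_fiber γ₁ e he) with hP₂
  have h := hf.transport_eq (γ₁.trans γ₂) e he (Γ := ⇑(P₁.trans P₂))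
    (P₁.trans P₂).continuous ?_ (P₁.trans P₂).source
  · rw [h]
    exact (P₁.trans P₂).target
  · intro t
    rw [Path.trans_apply, Path.trans_apply]
    split_ifs with h'
    · exact hf.liftPath'_lifts γ₁ e he _
    · exact hf.liftPath'_lifts γ₂ e₁ _ _

theorem IsCoveringMap.transport_homotopic (hf : IsCoveringMap f) {x y : X}
    (γ₀ γ₁ : Path x y) (h : γ₀.Homotopic γ₁) (e : E) (he : f e = x) :
    hf.transport γ₀ e he = hf.transport γ₁ e he := by
  obtain ⟨Hom⟩ := h
  obtain ⟨L, hLc, hLf, hL0⟩ := hf.exists_lift Hom.toContinuousMap (fun _ => e)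
    continuous_const (fun s => by rw [he]; exact (Hom.source s).symm)
  have h0 : hf.transport γ₀ e he = L (0, 1) := by
    refine hf.transport_eq γ₀ e he (Γ := fun t => L (0, t))
      (hLc.comp (Continuous.prodMk_right 0)) (fun t => ?_) (hL0 0)
    exact (hLf (0, t)).trans (Hom.apply_zero t)
  have h1 : hf.transport γ₁ e he = L (1, 1) := by
    refine hf.transport_eq γ₁ e he (Γ := fun t => L (1, t))
      (hLc.comp (Continuous.prodMk_right 1)) (fun t => ?_) (hL0 1)
    exact (hLf (1, t)).trans (Hom.apply_one t)
  rw [h0, h1]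
  refine hf.const_of_comp (g := fun s => L (s, 1))
    (hLc.comp (continuous_id.prodMk continuous_const)) (fun s s' => ?_) 0 1
  rw [hLf (s, 1), hLf (s', 1)]
  show Hom (s, 1) = Hom (s', 1)
  rw [Hom.target, Hom.target]

end PathLift
section Monodromy

open unitInterval

attribute [local instance] Path.Homotopic.setoid

variable {M' M : Type u} [TopologicalSpace M'] [TopologicalSpace M]
    {τ : C(M', M)} {x₀ : M}

/-- Transport in the fiber along a homotopy class of loops. -/
noncomputable def fiberTransport (hcov : IsCoveringMap τ)
    (q : Path.Homotopic.Quotient x₀ x₀) (e : ↥(τ ⁻¹' {x₀})) : ↥(τ ⁻¹' {x₀}) :=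
  Quotient.liftOn q
    (fun γ => (⟨hcov.transport γ e.1 e.2, hcov.transport_mem_fiber γ e.1 e.2⟩ : ↥(τ ⁻¹' {x₀})))
    (fun γ₀ γ₁ h => Subtype.ext (hcov.transport_homotopic γ₀ γ₁ h e.1 e.2))

theorem fiberTransport_mk (hcov : IsCoveringMap τ) (γ : Path x₀ x₀) (e : ↥(τ ⁻¹' {x₀})) :
    fiberTransport hcov ⟦γ⟧ e = ⟨hcov.transport γ e.1 e.2, hcov.transport_mem_fiber γ e.1 e.2⟩ :=
  rfl

theorem fiberTransport_refl (hcov : IsCoveringMap τ) (e : ↥(τ ⁻¹' {x₀})) :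
    fiberTransport hcov ⟦Path.refl x₀⟧ e = e :=
  Subtype.ext (hcov.transport_refl e.1 e.2)

theorem fiberTransport_comp (hcov : IsCoveringMap τ)
    (q₁ q₂ : Path.Homotopic.Quotient x₀ x₀) (e : ↥(τ ⁻¹' {x₀})) :
    fiberTransport hcov (q₁.trans q₂) e = fiberTransport hcov q₂ (fiberTransport hcov q₁ e) := by
  refine Quotient.inductionOn₂ q₁ q₂ (fun γ₁ γ₂ => ?_)
  show fiberTransport hcov ⟦γ₁.trans γ₂⟧ e = _
  exact Subtype.ext (hcov.transport_trans γ₁ γ₂ e.1 e.2)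

end Monodromy

section Main

open unitInterval CategoryTheory FundamentalGroupoid

attribute [local instance] Path.Homotopic.setoid

variable {M' M : Type u} [TopologicalSpace M'] [TopologicalSpace M]

theorem piOneInducedHom_hom (τ : C(M', M)) (x₀' : M') (a : FundamentalGroup M' x₀')
    (α : Path x₀' x₀') (hα : a = ⟦α⟧) :
    (piOneInducedHom τ x₀' a) = ⟦α.map τ.continuous⟧ := by
  have h1 : (piOneInducedHom τ x₀' a)
      = (πₘ (show TopCat.of M' ⟶ TopCat.of M from TopCat.ofHom τ)).map a := rfl
  rw [h1, hα]
  rfl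

theorem piOneInduced_ker_trivial (τ : C(M', M)) (hcov : IsCoveringMap τ) (x₀' : M')
    (a : FundamentalGroup M' x₀') (ha : piOneInducedHom τ x₀' a = 1) : a = 1 := by
  obtain ⟨α, hα⟩ := Quotient.exists_rep a
  have hmap : (⟦α.map τ.continuous⟧ : Path.Homotopic.Quotient (τ x₀') (τ x₀'))
      = ⟦Path.refl (τ x₀')⟧ := by
    rw [← piOneInducedHom_hom τ x₀' a α hα.symm, ha]
    rfl
  obtain ⟨Hom⟩ := Quotient.exact hmap
  -- lift the homotopy
  obtain ⟨L, hLc, hLf, hL0⟩ := hcov.exists_lift Hom.toContinuousMap (fun _ => x₀')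
    continuous_const (fun s => (Hom.source s).symm)
  have hα0 : ∀ t, L (0, t) = α t := by
    have := hcov.lift_unique' (A := fun t => L (0, t)) (B := ⇑α)
      (hLc.comp (Continuous.prodMk_right 0)) α.continuous
      (fun t => by rw [hLf (0, t)]; exact (Hom.apply_zero t).trans rfl) (by show L (0, 0) = α 0; rw [hL0 0, α.source])
    exact fun t => congrFun this t
  have hrefl : ∀ t, L (1, t) = x₀' := by
    have := hcov.lift_unique' (A := fun t => L (1, t)) (B := fun _ => x₀')
      (hLc.comp (Continuous.prodMk_right 1)) continuous_const
      (fun t => by rw [hLf (1, t)]; exact Hom.apply_one t) (hL0 1)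
    exact fun t => congrFun this t
  have hL1 : ∀ s, L (s, 1) = x₀' := by
    intro s
    have := hcov.const_of_comp (g := fun s => L (s, 1))
      (hLc.comp (continuous_id.prodMk continuous_const))
      (fun s s' => by
        rw [hLf (s, 1), hLf (s', 1)]
        show Hom (s, 1) = Hom (s', 1)
        rw [Hom.target, Hom.target]) s 1
    rw [this, hrefl 1]
  have F : Path.Homotopy α (Path.refl x₀') :=
    { toFun := L
      continuous_toFun := hLc
      map_zero_left := fun t => hα0 t
      map_one_left := fun t => hrefl t
      prop' := by
        intro s t ht
        rcases ht with h | h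
        · subst h
          show L (s, 0) = α 0
          rw [hL0 s, α.source]
        · rw [Set.mem_singleton_iff] at h
          subst h
          show L (s, 1) = α 1
          rw [hL1 s, α.target] }
  rw [hα.symm]
  show (⟦α⟧ : Path.Homotopic.Quotient x₀' x₀') = ⟦Path.refl x₀'⟧
  exact Quotient.sound ⟨F⟩

end Main

/-- If `τ : M̃ → M` is a degree `p` covering map of nonempty, path-connected, locally
path-connected spaces and `π₁(M, x₀)` is commutative, then `π₁(M̃, x̃₀)` is commutative and the
`p`-th power of any element of `π₁(M, x₀)` lies in the image of `τ_*`. -/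
theorem covering_abelian_and_pow_mem_range
    {M' M : Type u} [TopologicalSpace M'] [TopologicalSpace M]
    [Nonempty M'] [Nonempty M]
    [PathConnectedSpace M'] [PathConnectedSpace M]
    [LocallyPathConnectedSpace M'] [LocallyPathConnectedSpace M]
    (τ : C(M', M)) (hcov : IsCoveringMap τ)
    (p : ℕ) (hp : 0 < p) (hfib : ∀ x : M, Nat.card (τ ⁻¹' {x}) = p)
    (x₀' : M')
    (hab : ∀ a b : FundamentalGroup M (τ x₀'), a * b = b * a) :
    (∀ a b : FundamentalGroup M' x₀', a * b = b * a) ∧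
      ∀ γ : FundamentalGroup M (τ x₀'), γ ^ p ∈ (piOneInducedHom τ x₀').range := by
  classical
  set Φ := piOneInducedHom τ x₀' with hΦdef
  have hinj : Function.Injective Φ :=
    (injective_iff_map_eq_one Φ).mpr (fun a => piOneInduced_ker_trivial τ hcov x₀' a)
  constructor
  · intro a b
    apply hinj
    rw [map_mul, map_mul, hab]
  · intro γ
    letI action : MulAction (FundamentalGroup M (τ x₀')) ↥(τ ⁻¹' {τ x₀'}) :=
      { smul := fun g e =>
          fiberTransport hcov (show Path.Homotopic.Quotient (τ x₀') (τ x₀') from g) e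
        one_smul := fun e => by
          show fiberTransport hcov
            (show Path.Homotopic.Quotient (τ x₀') (τ x₀')
              from (1 : FundamentalGroup M (τ x₀'))) e = e
          have h1 : (show Path.Homotopic.Quotient (τ x₀') (τ x₀')
              from (1 : FundamentalGroup M (τ x₀'))) = ⟦Path.refl (τ x₀')⟧ := rfl
          rw [h1]
          exact fiberTransport_refl hcov e
        mul_smul := fun a b e => by
          show fiberTransport hcov
            (show Path.Homotopic.Quotient (τ x₀') (τ x₀') from (a * b)) e = _
          have h1 : (show Path.Homotopic.Quotient (τ x₀') (τ x₀') from (a * b))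
              = (show Path.Homotopic.Quotient (τ x₀') (τ x₀') from b).trans
                (show Path.Homotopic.Quotient (τ x₀') (τ x₀') from a) := rfl
          rw [h1]
          exact fiberTransport_comp hcov _ _ e }
    haveI htrans : MulAction.IsPretransitive (FundamentalGroup M (τ x₀')) ↥(τ ⁻¹' {τ x₀'}) := by
      constructor
      intro e₁ e₂
      have P : Path e₁.1 e₂.1 := PathConnectedSpace.somePath e₁.1 e₂.1
      have he₁ : τ e₁.1 = τ x₀' := e₁.2
      have he₂ : τ e₂.1 = τ x₀' := e₂.2
      set γp : Path (τ x₀') (τ x₀') := (P.map τ.continuous).cast he₁.symm he₂.symm with hγp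
      refine ⟨(show FundamentalGroup M (τ x₀') from
        (⟦γp⟧ : Path.Homotopic.Quotient (τ x₀') (τ x₀'))), ?_⟩
      show fiberTransport hcov _ e₁ = e₂
      have hhom : (show Path.Homotopic.Quotient (τ x₀') (τ x₀')
          from ((show FundamentalGroup M (τ x₀') from
            (⟦γp⟧ : Path.Homotopic.Quotient (τ x₀') (τ x₀'))) :
            FundamentalGroup M (τ x₀'))) = ⟦γp⟧ := rfl
      rw [hhom, fiberTransport_mk]
      apply Subtype.ext
      show hcov.transport γp e₁.1 e₁.2 = e₂.1
      have hlift : ∀ t, τ (P t) = γp t := by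
        intro t
        rw [hγp]
        rw [show (⇑((P.map τ.continuous).cast he₁.symm he₂.symm) : I → M)
          = ⇑(P.map τ.continuous) from Path.cast_coe _ _ _]
        rfl
      rw [hcov.transport_eq γp e₁.1 e₁.2 P.continuous hlift P.source]
      exact P.target
    set pt : ↥(τ ⁻¹' {τ x₀'}) := ⟨x₀', rfl⟩ with hpt
    have hstab : MulAction.stabilizer (FundamentalGroup M (τ x₀')) pt = Φ.range := by
      ext g
      rw [MulAction.mem_stabilizer_iff]
      constructor
      · intro hg
        obtain ⟨c, hc⟩ :=
          Quotient.exists_rep (show Path.Homotopic.Quotient (τ x₀') (τ x₀') from g)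
        have hg' : fiberTransport hcov ⟦c⟧ pt = pt := by rw [hc]; exact hg
        rw [fiberTransport_mk] at hg'
        have hend : hcov.transport c x₀' pt.2 = x₀' := congrArg Subtype.val hg'
        set α : Path x₀' x₀' := (hcov.liftPath' c x₀' pt.2).cast rfl hend.symm with hα
        refine ⟨(show FundamentalGroup M' x₀' from
          (⟦α⟧ : Path.Homotopic.Quotient x₀' x₀')), ?_⟩
        rw [piOneInducedHom_hom τ x₀' _ α rfl]
        show _ = (show Path.Homotopic.Quotient (τ x₀') (τ x₀') from g)
        rw [← hc]
        have : α.map τ.continuous = c := by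
          ext t
          show τ (α t) = c t
          rw [hα]
          rw [show (⇑((hcov.liftPath' c x₀' pt.2).cast rfl hend.symm) : I → M')
            = ⇑(hcov.liftPath' c x₀' pt.2) from Path.cast_coe _ _ _]
          exact hcov.liftPath'_lifts c x₀' pt.2 t
        rw [this]
      · rintro ⟨a, rfl⟩
        obtain ⟨α, hα⟩ := Quotient.exists_rep a
        show fiberTransport hcov _ pt = pt
        have h1 : (show Path.Homotopic.Quotient (τ x₀') (τ x₀') from (Φ a))
            = ⟦α.map τ.continuous⟧ := piOneInducedHom_hom τ x₀' a α hα.symm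
        rw [h1, fiberTransport_mk]
        apply Subtype.ext
        show hcov.transport (α.map τ.continuous) x₀' pt.2 = x₀'
        rw [hcov.transport_eq (α.map τ.continuous) x₀' pt.2 (Γ := ⇑α) α.continuous
          (fun t => rfl) α.source]
        exact α.target
    haveI hnormal : Φ.range.Normal := by
      constructor
      intro n hn g
      have h2 : g * n * g⁻¹ = n := by
        rw [hab g n, mul_assoc, mul_inv_cancel, mul_one]
      rw [h2]; exact hn
    have hidx : Φ.range.index = p := by
      rw [← hstab, MulAction.index_stabilizer_of_transitive]
      exact hfib (τ x₀')
    have hpow := Subgroup.pow_index_mem Φ.range γ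
    rwa [hidx] at hpow
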